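/- Fix true transition probabilities P*, δ ∈ (0,1), and for each state–action pair (s,a) a sample size n_{s,a} ≥ 1. For each (s,a), let p̄_{s,a} be the empirical distribution of n_{s,a} i.i.d. samples from p*_{s,a}, all samples across all state–action pairs being independent. Define the Hoeffding ambiguity set P^H_{s,a} = {p ∈ Δ^S : ‖p − p̄_{s,a}‖₁ ≤ √((2/n_{s,a}) log(S·A·2^S/δ))}. Then, with probability at least 1 − δ over the samples, v̂_{P^H}^π ≤ v_{P*}^π componentwise simultaneously for every deterministic policy π; in particular, for the optimal robust policy π̂* of the RMDP with ambiguity set P^H and any initial distribution p₀ ∈ Δ^S, p₀ᵀ v̂*_{P^H} ≤ p₀ᵀ v_{P*}^{π̂*} with probability at least 1 − δ. (Theorem 2: safety of the Hoeffding confidence-region ambiguity set.) -/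

import Mathlib

open MeasureTheory

noncomputable section

/-- Inner product of two vectors in `ℝ^S`. -/
def dot {S : ℕ} (p v : Fin S → ℝ) : ℝ := ∑ j, p j * v j

/-- Bellman operator for a deterministic policy `π` under transition probabilities `P`. -/
def Bellman {S A : ℕ} (r : Fin S → Fin A → ℝ) (γ : ℝ)
    (P : Fin S → Fin A → Fin S → ℝ) (π : Fin S → Fin A)
    (v : Fin S → ℝ) : Fin S → ℝ :=
  fun s => r s (π s) + γ * dot (P s (π s)) v

/-- Robust Bellman operator for a deterministic policy `π` under ambiguity set `Amb`. -/
def robustBellman {S A : ℕ} (r : Fin S → Fin A → ℝ) (γ : ℝ)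
    (Amb : Fin S → Fin A → Set (Fin S → ℝ)) (π : Fin S → Fin A)
    (v : Fin S → ℝ) : Fin S → ℝ :=
  fun s => r s (π s) + γ * sInf ((fun p => dot p v) '' Amb s (π s))

/-- Optimal robust Bellman operator under ambiguity set `Amb`. -/
def optRobustBellman {S A : ℕ} (r : Fin S → Fin A → ℝ) (γ : ℝ)
    (Amb : Fin S → Fin A → Set (Fin S → ℝ)) (v : Fin S → ℝ) : Fin S → ℝ :=
  fun s => ⨆ a : Fin A, (r s a + γ * sInf ((fun p => dot p v) '' Amb s a))

/-- Empirical distribution of `n` samples `X i` with values in `{1,…,S}`. -/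
def empiricalDist {Ω : Type*} {S n : ℕ} (X : Fin n → Ω → Fin S) (ω : Ω) : Fin S → ℝ :=
  fun j => (Finset.univ.filter fun i => X i ω = j).card / n

section Auxiliary

open ProbabilityTheory

/-- Hoeffding's lemma for a Bernoulli random variable. -/
lemma bernoulli_mgf_bound {q : ℝ} (hq0 : 0 ≤ q) (hq1 : q ≤ 1) (t : ℝ) :
    q * Real.exp t + (1 - q) ≤ Real.exp (q * t + t ^ 2 / 8) := by
  set D : ℝ → ℝ := fun x => q * Real.exp x + (1 - q) with hD
  have hDpos : ∀ x, 0 < D x := by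
    intro x
    rcases eq_or_lt_of_le hq0 with h | h
    · simp [hD, ← h]
    · have : 0 < q * Real.exp x := mul_pos h (Real.exp_pos x)
      have : (0:ℝ) ≤ 1 - q := by linarith
      simp only [hD]; nlinarith [mul_pos h (Real.exp_pos x)]
  set φ : ℝ → ℝ := fun x => q * x + x ^ 2 / 8 - Real.log (D x) with hφdef
  set ψ : ℝ → ℝ := fun x => q + x / 4 - q * Real.exp x / D x with hψdef
  have hDderiv : ∀ x, HasDerivAt D (q * Real.exp x) x := by
    intro x
    exact ((Real.hasDerivAt_exp x).const_mul q).add_const (1 - q)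
  have hφderiv : ∀ x, HasDerivAt φ (ψ x) x := by
    intro x
    have h1 : HasDerivAt (fun x : ℝ => q * x) q x := by
      simpa using (hasDerivAt_id x).const_mul q
    have h2 : HasDerivAt (fun x : ℝ => x ^ 2 / 8) (x / 4) x := by
      have := (hasDerivAt_pow 2 x).div_const 8
      exact this.congr_deriv (by ring)
    have h3 : HasDerivAt (fun x => Real.log (D x)) (q * Real.exp x / D x) x :=
      (hDderiv x).log (hDpos x).ne'
    exact (h1.add h2).sub h3
  have hψderiv : ∀ x, HasDerivAt ψ (1 / 4 - q * Real.exp x * (1 - q) / (D x) ^ 2) x := by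
    intro x
    have h1 : HasDerivAt (fun x : ℝ => q + x / 4) (1 / 4) x := by
      simpa using ((hasDerivAt_id x).div_const 4).const_add q
    have h2 : HasDerivAt (fun x => q * Real.exp x / D x)
        ((q * Real.exp x * D x - q * Real.exp x * (q * Real.exp x)) / (D x) ^ 2) x :=
      ((Real.hasDerivAt_exp x).const_mul q).div (hDderiv x) (hDpos x).ne'
    have heq : (q * Real.exp x * D x - q * Real.exp x * (q * Real.exp x)) / (D x) ^ 2
        = q * Real.exp x * (1 - q) / (D x) ^ 2 := by
      congr 1; simp only [hD]; ring
    rw [heq] at h2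
    exact h1.sub h2
  have hψnonneg : ∀ x, 0 ≤ 1 / 4 - q * Real.exp x * (1 - q) / (D x) ^ 2 := by
    intro x
    have hD2 : 0 < (D x) ^ 2 := pow_pos (hDpos x) 2
    have key : q * Real.exp x * (1 - q) / (D x) ^ 2 ≤ 1 / 4 := by
      rw [div_le_iff₀ hD2]
      have := sq_nonneg (q * Real.exp x - (1 - q))
      simp only [hD]; nlinarith
    linarith
  have hψmono : Monotone ψ := by
    apply monotone_of_deriv_nonneg
    · exact fun x => (hψderiv x).differentiableAt
    · intro x; rw [(hψderiv x).deriv]; exact hψnonneg x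
  have hψ0 : ψ 0 = 0 := by
    simp [hψdef, hD]
  have hφ0 : φ 0 = 0 := by
    simp [hφdef, hD]
  have key : ∀ x, 0 ≤ φ x := by
    intro x
    rcases le_total 0 x with hx | hx
    · have hmono : MonotoneOn φ (Set.Ici (0:ℝ)) := by
        apply monotoneOn_of_deriv_nonneg (convex_Ici 0)
        · exact (Differentiable.continuous (fun y => (hφderiv y).differentiableAt)).continuousOn
        · exact fun y _ => (hφderiv y).differentiableAt.differentiableWithinAt
        · intro y hy
          rw [(hφderiv y).deriv]
          rw [interior_Ici] at hy
          have : ψ 0 ≤ ψ y := hψmono (le_of_lt hy)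
          linarith [hψ0 ▸ this]
      have := hmono (Set.mem_Ici.2 le_rfl) (Set.mem_Ici.2 hx) hx
      linarith [hφ0 ▸ this]
    · have hanti : AntitoneOn φ (Set.Iic (0:ℝ)) := by
        apply antitoneOn_of_deriv_nonpos (convex_Iic 0)
        · exact (Differentiable.continuous (fun y => (hφderiv y).differentiableAt)).continuousOn
        · exact fun y _ => (hφderiv y).differentiableAt.differentiableWithinAt
        · intro y hy
          rw [(hφderiv y).deriv]
          rw [interior_Iic] at hy
          have : ψ y ≤ ψ 0 := hψmono (le_of_lt hy)
          linarith [hψ0 ▸ this]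
      have := hanti (Set.mem_Iic.2 hx) (Set.mem_Iic.2 le_rfl) hx
      linarith [hφ0 ▸ this]
  have := key t
  have hlog : Real.log (D t) ≤ q * t + t ^ 2 / 8 := by
    simp only [hφdef] at this; linarith
  calc D t = Real.exp (Real.log (D t)) := (Real.exp_log (hDpos t)).symm
    _ ≤ Real.exp (q * t + t ^ 2 / 8) := Real.exp_le_exp.2 hlog

/-- Restriction of an independent family along an injective reindexing. -/
lemma iIndepFun_precomp {Ω ι κ β : Type*} [MeasurableSpace Ω] {μ : Measure Ω}
    [mβ : MeasurableSpace β] {f : ι → Ω → β}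
    (h : ProbabilityTheory.iIndepFun f μ) (g : κ → ι)
    (hg : Function.Injective g) :
    ProbabilityTheory.iIndepFun (fun k => f (g k)) μ := by
  classical
  rw [iIndepFun_iff_measure_inter_preimage_eq_mul] at h ⊢
  intro S sets hsets
  set sets' : ι → Set β := fun i => ⋂ k ∈ S.filter (fun k => g k = i), sets k with hsets'
  have hfix : ∀ k ∈ S, sets' (g k) = sets k := by
    intro k hk
    have : S.filter (fun k' => g k' = g k) = {k} := by
      ext k'
      simp only [Finset.mem_filter, Finset.mem_singleton]
      constructor
      · rintro ⟨_, h2⟩; exact hg h2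
      · rintro rfl; exact ⟨hk, rfl⟩
    simp only [hsets', this]
    simp
  have hmeas' : ∀ i ∈ S.image g, MeasurableSet (sets' i) := by
    intro i _
    exact MeasurableSet.biInter (Finset.countable_toSet _)
      (fun k hk => hsets k (Finset.mem_filter.1 hk).1)
  have := h (S.image g) hmeas'
  rw [Finset.set_biInter_finset_image, Finset.prod_image
    (fun k hk k' hk' hh => hg hh)] at this
  calc μ (⋂ k ∈ S, f (g k) ⁻¹' sets k)
      = μ (⋂ k ∈ S, f (g k) ⁻¹' sets' (g k)) := by
        congr 1; exact Set.iInter₂_congr fun k hk => by rw [hfix k hk]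
    _ = ∏ k ∈ S, μ (f (g k) ⁻¹' sets' (g k)) := this
    _ = ∏ k ∈ S, μ (f (g k) ⁻¹' sets k) :=
        Finset.prod_congr rfl fun k hk => by rw [hfix k hk]

/-- Chernoff–Hoeffding concentration for a sum of indicators of i.i.d. samples. -/
lemma indicator_sum_concentration {Ω : Type*} [MeasurableSpace Ω] (μ : Measure Ω)
    [IsProbabilityMeasure μ] {m Sc : ℕ} (hm : 0 < m) (X : Fin m → Ω → Fin Sc)
    (hmeas : ∀ i, Measurable (X i))
    (hindep : ProbabilityTheory.iIndepFun X μ)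
    (p : Fin Sc → ℝ) (hp : ∀ j, 0 ≤ p j)
    (hlaw : ∀ i j, μ {ω | X i ω = j} = ENNReal.ofReal (p j))
    (B : Finset (Fin Sc)) (ε : ℝ) (hε : 0 ≤ ε) :
    μ {ω | (m : ℝ) * (∑ j ∈ B, p j) + m * ε / 2 ≤
        ∑ i, (if X i ω ∈ B then (1:ℝ) else 0)} ≤
      ENNReal.ofReal (Real.exp (-((m : ℝ) * ε ^ 2 / 2))) := by
  classical
  set q : ℝ := ∑ j ∈ B, p j with hqdef
  have hq0 : 0 ≤ q := Finset.sum_nonneg fun j _ => hp j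
  set Y : Fin m → Ω → ℝ := fun i ω => if X i ω ∈ B then (1:ℝ) else 0 with hYdef
  have hBmeas : MeasurableSet (B : Set (Fin Sc)) := B.measurableSet
  have hsetmeas : ∀ i, MeasurableSet (X i ⁻¹' (B : Set (Fin Sc))) :=
    fun i => (hmeas i) hBmeas
  have hYind : ∀ i, Y i = Set.indicator (X i ⁻¹' (B : Set (Fin Sc))) (fun _ => (1:ℝ)) := by
    intro i; funext ω
    simp [hYdef, Set.indicator_apply, Set.mem_preimage]
  have hYmeas : ∀ i, Measurable (Y i) := by
    intro i; rw [hYind i]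
    exact (measurable_const.indicator (hsetmeas i))
  have hμB : ∀ i, μ (X i ⁻¹' (B : Set (Fin Sc))) = ENNReal.ofReal q := by
    intro i
    have hun : X i ⁻¹' (B : Set (Fin Sc)) = ⋃ j ∈ B, X i ⁻¹' {j} := by
      ext ω; simp [Set.mem_preimage]
    have hd : (B : Set (Fin Sc)).PairwiseDisjoint (fun j => X i ⁻¹' {j}) := by
      intro j _ j' _ hjj'
      apply Set.disjoint_left.2
      intro ω hω hω'
      simp only [Set.mem_preimage, Set.mem_singleton_iff] at hω hω'
      exact hjj' (hω ▸ hω')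
    rw [hun, measure_biUnion_finset hd (fun j _ => (hmeas i) (measurableSet_singleton j))]
    rw [hqdef, ENNReal.ofReal_sum_of_nonneg (fun j _ => hp j)]
    refine Finset.sum_congr rfl fun j _ => ?_
    have : X i ⁻¹' {j} = {ω | X i ω = j} := by ext ω; simp
    rw [this, hlaw i j]
  have hq1 : q ≤ 1 := by
    have h1 : ENNReal.ofReal q ≤ 1 := by
      rw [← hμB ⟨0, hm⟩]; exact prob_le_one
    exact (ENNReal.ofReal_le_one).1 h1
  set t : ℝ := 2 * ε with htdef
  have ht : 0 ≤ t := by positivity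
  have hexpY : ∀ i, (fun ω => Real.exp (t * Y i ω)) =
      fun ω => 1 + (Real.exp t - 1) * Set.indicator (X i ⁻¹' (B : Set (Fin Sc)))
        (fun _ => (1:ℝ)) ω := by
    intro i; funext ω
    rw [hYind i]
    by_cases h : ω ∈ X i ⁻¹' (B : Set (Fin Sc)) <;> simp [h]
  have hintY : ∀ i, Integrable (fun ω => Real.exp (t * Y i ω)) μ := by
    intro i
    rw [hexpY i]
    exact (integrable_const 1).add
      (((integrable_const (1:ℝ)).indicator (hsetmeas i)).const_mul _)
  have hmgfY : ∀ i, mgf (Y i) μ t = q * Real.exp t + (1 - q) := by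
    intro i
    rw [mgf, hexpY i]
    rw [integral_add (integrable_const 1)
      (((integrable_const (1:ℝ)).indicator (hsetmeas i)).const_mul _)]
    rw [integral_const, integral_const_mul, integral_indicator_const _ (hsetmeas i)]
    simp [measureReal_def, hμB i, ENNReal.toReal_ofReal hq0]
    ring
  have hYindep : ProbabilityTheory.iIndepFun Y μ := by
    have := hindep.comp (fun _ j => if j ∈ B then (1:ℝ) else 0)
      (fun _ => measurable_of_countable _)
    exact this
  have hmgfsum : mgf (∑ i, Y i) μ t = (q * Real.exp t + (1 - q)) ^ m := by
    rw [hYindep.mgf_sum hYmeas]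
    rw [Finset.prod_congr rfl (fun i _ => hmgfY i)]
    simp [Finset.prod_const, Finset.card_univ]
  set c : ℝ := (m : ℝ) * q + m * ε / 2 with hcdef
  have hchernoff := measure_ge_le_exp_mul_mgf (μ := μ) (X := ∑ i, Y i) (t := t) c ht
    (hYindep.integrable_exp_mul_sum hYmeas (fun i _ => hintY i))
  have hbound : Real.exp (-t * c) * mgf (∑ i, Y i) μ t ≤
      Real.exp (-((m : ℝ) * ε ^ 2 / 2)) := by
    rw [hmgfsum]
    have h1 : (q * Real.exp t + (1 - q)) ^ m ≤ Real.exp (q * t + t ^ 2 / 8) ^ m := by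
      apply pow_le_pow_left₀
      · nlinarith [Real.exp_pos t, mul_nonneg hq0 (Real.exp_pos t).le]
      · exact bernoulli_mgf_bound hq0 hq1 t
    have h2 : Real.exp (-t * c) * (q * Real.exp t + (1 - q)) ^ m ≤
        Real.exp (-t * c) * Real.exp (q * t + t ^ 2 / 8) ^ m := by
      apply mul_le_mul_of_nonneg_left h1 (Real.exp_pos _).le
    refine h2.trans ?_
    rw [← Real.exp_nat_mul, ← Real.exp_add]
    apply Real.exp_le_exp.2
    rw [htdef, hcdef]; ring_nf
    nlinarith [sq_nonneg ε]
  have hev : {ω | (m : ℝ) * (∑ j ∈ B, p j) + m * ε / 2 ≤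
      ∑ i, (if X i ω ∈ B then (1:ℝ) else 0)} = {ω | c ≤ (∑ i, Y i) ω} := by
    ext ω; simp [hcdef, hqdef, hYdef, Finset.sum_apply]
  rw [hev]
  have hfin : μ {ω | c ≤ (∑ i, Y i) ω} ≠ ⊤ := measure_ne_top μ _
  rw [← ENNReal.ofReal_toReal hfin]
  exact ENNReal.ofReal_le_ofReal (hchernoff.trans hbound)

lemma dot_le_of_forall_le {S : ℕ} {p x : Fin S → ℝ} {M : ℝ}
    (hp : p ∈ stdSimplex ℝ (Fin S)) (h : ∀ j, x j ≤ M) : dot p x ≤ M := by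
  calc dot p x = ∑ j, p j * x j := rfl
    _ ≤ ∑ j, p j * M := Finset.sum_le_sum fun j _ =>
        mul_le_mul_of_nonneg_left (h j) (hp.1 j)
    _ = M := by rw [← Finset.sum_mul, hp.2, one_mul]

lemma le_dot_of_forall_le {S : ℕ} {p x : Fin S → ℝ} {M : ℝ}
    (hp : p ∈ stdSimplex ℝ (Fin S)) (h : ∀ j, M ≤ x j) : M ≤ dot p x := by
  calc M = ∑ j, p j * M := by rw [← Finset.sum_mul, hp.2, one_mul]
    _ ≤ ∑ j, p j * x j := Finset.sum_le_sum fun j _ =>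
        mul_le_mul_of_nonneg_left (h j) (hp.1 j)
    _ = dot p x := rfl

lemma bddBelow_dot_image {S : ℕ} (hS : 0 < S) {P : Set (Fin S → ℝ)}
    (hsub : P ⊆ stdSimplex ℝ (Fin S)) (v : Fin S → ℝ) :
    BddBelow ((fun p => dot p v) '' P) := by
  haveI : Nonempty (Fin S) := Fin.pos_iff_nonempty.1 hS
  refine ⟨Finset.univ.inf' Finset.univ_nonempty v, ?_⟩
  rintro y ⟨p, hp, rfl⟩
  exact le_dot_of_forall_le (hsub hp) fun j => Finset.inf'_le _ (Finset.mem_univ j)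

lemma dot_sub {S : ℕ} (p u w : Fin S → ℝ) :
    dot p u - dot p w = dot p (fun j => u j - w j) := by
  simp [dot, mul_sub, Finset.sum_sub_distrib]

/-- Safety: robust fixed point is below true fixed point when the true kernel is in the set. -/
lemma robust_fixed_le_true {S A : ℕ} (hS : 0 < S)
    {r : Fin S → Fin A → ℝ} {γ : ℝ} (hγ0 : 0 ≤ γ) (hγ1 : γ < 1)
    {Pstar : Fin S → Fin A → Fin S → ℝ}
    (hPstar : ∀ s a, Pstar s a ∈ stdSimplex ℝ (Fin S))
    {Amb : Fin S → Fin A → Set (Fin S → ℝ)}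
    (hsub : ∀ s a, Amb s a ⊆ stdSimplex ℝ (Fin S))
    {π : Fin S → Fin A}
    (hmem : ∀ s, Pstar s (π s) ∈ Amb s (π s))
    {v w : Fin S → ℝ}
    (hv : v = robustBellman r γ Amb π v) (hw : w = Bellman r γ Pstar π w) :
    ∀ s, v s ≤ w s := by
  haveI : Nonempty (Fin S) := Fin.pos_iff_nonempty.1 hS
  set M : ℝ := Finset.univ.sup' Finset.univ_nonempty (fun s => v s - w s) with hM
  have hstep : ∀ s, v s - w s ≤ γ * M := by
    intro s
    have hvs : v s = r s (π s) + γ * sInf ((fun p => dot p v) '' Amb s (π s)) :=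
      congrFun hv s
    have hws : w s = r s (π s) + γ * dot (Pstar s (π s)) w := congrFun hw s
    have hinf : sInf ((fun p => dot p v) '' Amb s (π s)) ≤ dot (Pstar s (π s)) v :=
      csInf_le (bddBelow_dot_image hS (hsub s (π s)) v) ⟨_, hmem s, rfl⟩
    have hdot : dot (Pstar s (π s)) v - dot (Pstar s (π s)) w ≤ M := by
      rw [dot_sub]
      exact dot_le_of_forall_le (hPstar s (π s))
        (fun j => Finset.le_sup' (fun s => v s - w s) (Finset.mem_univ j))
    calc v s - w s = γ * (sInf ((fun p => dot p v) '' Amb s (π s))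
          - dot (Pstar s (π s)) w) := by rw [hvs, hws]; ring
      _ ≤ γ * (dot (Pstar s (π s)) v - dot (Pstar s (π s)) w) := by
          apply mul_le_mul_of_nonneg_left _ hγ0; linarith
      _ ≤ γ * M := mul_le_mul_of_nonneg_left hdot hγ0
  have hMle : M ≤ γ * M := Finset.sup'_le _ _ fun s _ => hstep s
  have hM0 : M ≤ 0 := by nlinarith
  intro s
  have : v s - w s ≤ M := Finset.le_sup' (fun s => v s - w s) (Finset.mem_univ s)
  linarith

/-- Uniqueness of the robust fixed point. -/
lemma robust_fixed_unique {S A : ℕ} (hS : 0 < S)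
    {r : Fin S → Fin A → ℝ} {γ : ℝ} (hγ0 : 0 ≤ γ) (hγ1 : γ < 1)
    {Amb : Fin S → Fin A → Set (Fin S → ℝ)}
    (hsub : ∀ s a, Amb s a ⊆ stdSimplex ℝ (Fin S))
    (hne : ∀ s a, (Amb s a).Nonempty)
    {π : Fin S → Fin A} {u w : Fin S → ℝ}
    (hu : u = robustBellman r γ Amb π u) (hw : w = robustBellman r γ Amb π w) :
    u = w := by
  haveI : Nonempty (Fin S) := Fin.pos_iff_nonempty.1 hS
  set D : ℝ := Finset.univ.sup' Finset.univ_nonempty (fun s => |u s - w s|) with hD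
  have habs : ∀ j, |u j - w j| ≤ D := fun j =>
    Finset.le_sup' (fun s => |u s - w s|) (Finset.mem_univ j)
  have hinf_close : ∀ s a, |sInf ((fun p => dot p u) '' Amb s a)
      - sInf ((fun p => dot p w) '' Amb s a)| ≤ D := by
    intro s a
    have key : ∀ (x y : Fin S → ℝ), (∀ j, x j - y j ≤ D) →
        sInf ((fun p => dot p x) '' Amb s a) ≤ sInf ((fun p => dot p y) '' Amb s a) + D := by
      intro x y hxy
      have h1 : sInf ((fun p => dot p x) '' Amb s a) - D ≤
          sInf ((fun p => dot p y) '' Amb s a) := by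
        apply le_csInf ((hne s a).image _)
        rintro b ⟨p, hp, rfl⟩
        have h2 : sInf ((fun p => dot p x) '' Amb s a) ≤ dot p x :=
          csInf_le (bddBelow_dot_image hS (hsub s a) x) ⟨p, hp, rfl⟩
        have h3 : dot p x - dot p y ≤ D := by
          rw [dot_sub]
          exact dot_le_of_forall_le (hsub s a hp) hxy
        linarith
      linarith
    have k1 := key u w (fun j => (abs_le.1 (habs j)).2)
    have k2 := key w u (fun j => by have := (abs_le.1 (habs j)).1; linarith)
    rw [abs_le]; constructor <;> linarith
  have hstep : ∀ s, |u s - w s| ≤ γ * D := by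
    intro s
    have hus : u s = r s (π s) + γ * sInf ((fun p => dot p u) '' Amb s (π s)) :=
      congrFun hu s
    have hws : w s = r s (π s) + γ * sInf ((fun p => dot p w) '' Amb s (π s)) :=
      congrFun hw s
    have : u s - w s = γ * (sInf ((fun p => dot p u) '' Amb s (π s))
        - sInf ((fun p => dot p w) '' Amb s (π s))) := by rw [hus, hws]; ring
    rw [this, abs_mul, abs_of_nonneg hγ0]
    exact mul_le_mul_of_nonneg_left (hinf_close s (π s)) hγ0
  have hDle : D ≤ γ * D := Finset.sup'_le _ _ fun s _ => hstep s
  have hD0 : D ≤ 0 := by nlinarith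
  funext s
  have h1 : |u s - w s| ≤ D := habs s
  have h2 : 0 ≤ |u s - w s| := abs_nonneg _
  have : u s - w s = 0 := abs_eq_zero.1 (le_antisymm (h1.trans hD0) h2)
  linarith

lemma emp_mem_simplex {Ω : Type*} {S m : ℕ} (hm : 0 < m) (X : Fin m → Ω → Fin S) (ω : Ω) :
    empiricalDist X ω ∈ stdSimplex ℝ (Fin S) := by
  constructor
  · intro j; unfold empiricalDist; positivity
  · unfold empiricalDist
    rw [← Finset.sum_div]
    rw [div_eq_one_iff_eq (by exact_mod_cast hm.ne' : (m:ℝ) ≠ 0)]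
    have h := Finset.card_eq_sum_card_fiberwise
      (f := fun i => X i ω) (s := Finset.univ) (t := Finset.univ)
      (fun i _ => Finset.mem_univ _)
    rw [Finset.card_univ, Fintype.card_fin] at h
    exact_mod_cast h.symm

lemma emp_sum_B {Ω : Type*} {S m : ℕ} (hm : 0 < m) (X : Fin m → Ω → Fin S) (ω : Ω)
    (B : Finset (Fin S)) :
    (m : ℝ) * ∑ j ∈ B, empiricalDist X ω j =
      ∑ i, (if X i ω ∈ B then (1:ℝ) else 0) := by
  have hm' : (m:ℝ) ≠ 0 := by exact_mod_cast hm.ne'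
  unfold empiricalDist
  rw [← Finset.sum_div, mul_comm, div_mul_cancel₀ _ hm']
  have h := Finset.card_eq_sum_card_fiberwise
    (f := fun i => X i ω) (s := Finset.univ.filter fun i => X i ω ∈ B) (t := B)
    (fun i hi => (Finset.mem_filter.1 hi).2)
  have h2 : ∀ j ∈ B, ((Finset.univ.filter fun i => X i ω ∈ B).filter
      fun i => X i ω = j) = Finset.univ.filter fun i => X i ω = j := by
    intro j hj
    rw [Finset.filter_filter]
    apply Finset.filter_congr
    intro i _
    constructor
    · rintro ⟨_, h⟩; exact h
    · rintro h; exact ⟨h ▸ hj, h⟩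
  have h3 : (Finset.univ.filter fun i => X i ω ∈ B).card =
      ∑ j ∈ B, (Finset.univ.filter fun i => X i ω = j).card := by
    rw [h]; exact Finset.sum_congr rfl fun j hj => by rw [h2 j hj]
  rw [Finset.sum_boole]
  exact_mod_cast h3.symm

lemma weissman_inclusion {Ω : Type*} {S m : ℕ} (hm : 0 < m) (X : Fin m → Ω → Fin S)
    (ω : Ω) (p : Fin S → ℝ) (hp : p ∈ stdSimplex ℝ (Fin S)) (ε : ℝ)
    (h : ε < ∑ j, |p j - empiricalDist X ω j|) :
    ∃ B : Finset (Fin S),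
      (m : ℝ) * (∑ j ∈ B, p j) + m * ε / 2 ≤ ∑ i, (if X i ω ∈ B then (1:ℝ) else 0) := by
  set e : Fin S → ℝ := empiricalDist X ω with he
  have hesimp : e ∈ stdSimplex ℝ (Fin S) := emp_mem_simplex hm X ω
  set B : Finset (Fin S) := Finset.univ.filter fun j => p j ≤ e j with hB
  refine ⟨B, ?_⟩
  have hsum0 : ∑ j, (e j - p j) = 0 := by
    rw [Finset.sum_sub_distrib, hesimp.2, hp.2]; ring
  have hsplit := Finset.sum_filter_add_sum_filter_not Finset.univ
    (fun j => p j ≤ e j) (fun j => e j - p j)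
  have hA : ∑ j ∈ B, |p j - e j| = ∑ j ∈ B, (e j - p j) := by
    refine Finset.sum_congr rfl fun j hj => ?_
    have := (Finset.mem_filter.1 hj).2
    rw [abs_of_nonpos (by linarith)]; ring
  have hC : ∑ j ∈ Finset.univ.filter (fun j => ¬ p j ≤ e j), |p j - e j| =
      ∑ j ∈ Finset.univ.filter (fun j => ¬ p j ≤ e j), (p j - e j) := by
    refine Finset.sum_congr rfl fun j hj => ?_
    have := (Finset.mem_filter.1 hj).2
    push_neg at this
    rw [abs_of_pos (by linarith)]
  have hD : ∑ j ∈ Finset.univ.filter (fun j => ¬ p j ≤ e j), (p j - e j) =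
      - ∑ j ∈ Finset.univ.filter (fun j => ¬ p j ≤ e j), (e j - p j) := by
    rw [← Finset.sum_neg_distrib]
    exact Finset.sum_congr rfl fun j _ => by ring
  have htot : ∑ j, |p j - e j| = ∑ j ∈ B, |p j - e j| +
      ∑ j ∈ Finset.univ.filter (fun j => ¬ p j ≤ e j), |p j - e j| :=
    (Finset.sum_filter_add_sum_filter_not Finset.univ (fun j => p j ≤ e j)
      (fun j => |p j - e j|)).symm
  have hBhalf : ε / 2 < ∑ j ∈ B, (e j - p j) := by
    have h1 : (∑ j ∈ B, (e j - p j)) + ∑ j ∈ Finset.univ.filter (fun j => ¬ p j ≤ e j),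
        (e j - p j) = 0 := by rw [hsplit]; exact hsum0
    rw [htot, hA, hC, hD] at h
    linarith
  have key : (m:ℝ) * ∑ j ∈ B, e j = ∑ i, (if X i ω ∈ B then (1:ℝ) else 0) :=
    emp_sum_B hm X ω B
  have hm0 : (0:ℝ) < m := by exact_mod_cast hm
  have : ∑ j ∈ B, e j = ∑ j ∈ B, p j + ∑ j ∈ B, (e j - p j) := by
    rw [Finset.sum_sub_distrib]; ring
  nlinarith [hBhalf, key, this]

end Auxiliary

/-- Theorem 2: safety of the Hoeffding confidence-region ambiguity set.  With probability at
least `1 − δ` over the i.i.d. samples, the robust value function for the Hoeffding ambiguity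
set lower-bounds the true value function simultaneously for every deterministic policy; in
particular the optimal robust return estimate is a safe estimate for the optimal robust
policy. -/
theorem hoeffding_ambiguity_safety
    {S A : ℕ} (hS : 0 < S) (hA : 0 < A)
    (r : Fin S → Fin A → ℝ) (γ : ℝ) (hγ0 : 0 ≤ γ) (hγ1 : γ < 1)
    (δ : ℝ) (hδ0 : 0 < δ) (hδ1 : δ < 1)
    (Pstar : Fin S → Fin A → Fin S → ℝ)
    (hPstar : ∀ s a, Pstar s a ∈ stdSimplex ℝ (Fin S))
    -- sample sizes
    (n : Fin S → Fin A → ℕ) (hn : ∀ s a, 1 ≤ n s a)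
    {Ω : Type*} [MeasurableSpace Ω] (μ : Measure Ω) [IsProbabilityMeasure μ]
    -- the i.i.d. samples: X s a i is the i-th sample for the pair (s,a)
    (X : (s : Fin S) → (a : Fin A) → Fin (n s a) → Ω → Fin S)
    (hXmeas : ∀ s a i, Measurable (X s a i))
    (hXindep : ProbabilityTheory.iIndepFun
      (fun (i : (s : Fin S) × (a : Fin A) × Fin (n s a)) => X i.1 i.2.1 i.2.2) μ)
    (hXlaw : ∀ s a i j, μ {ω | X s a i ω = j} = ENNReal.ofReal (Pstar s a j))
    -- the Hoeffding ambiguity set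
    (AmbH : Ω → Fin S → Fin A → Set (Fin S → ℝ))
    (hAmbH : ∀ ω s a, AmbH ω s a = {p ∈ stdSimplex ℝ (Fin S) |
      ∑ j, |p j - empiricalDist (X s a) ω j| ≤
        Real.sqrt ((2 / (n s a)) * Real.log (S * A * 2 ^ S / δ))})
    -- robust value function of each policy under the realized Hoeffding set
    (vR : Ω → (Fin S → Fin A) → Fin S → ℝ)
    (hvR : ∀ ω π, vR ω π = robustBellman r γ (AmbH ω) π (vR ω π))
    -- true value function of each policy
    (vT : (Fin S → Fin A) → Fin S → ℝ)
    (hvT : ∀ π, vT π = Bellman r γ Pstar π (vT π))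
    -- optimal robust value function and an optimal robust policy
    (vRstar : Ω → Fin S → ℝ) (πhat : Ω → Fin S → Fin A)
    (hvRstar : ∀ ω, vRstar ω = optRobustBellman r γ (AmbH ω) (vRstar ω))
    (hπhat : ∀ ω, vRstar ω = robustBellman r γ (AmbH ω) (πhat ω) (vRstar ω))
    -- initial distribution
    (p0 : Fin S → ℝ) (hp0 : p0 ∈ stdSimplex ℝ (Fin S))
    -- measurability of the two events
    (hE1 : MeasurableSet {ω | ∀ π : Fin S → Fin A, ∀ s, vR ω π s ≤ vT π s})
    (hE2 : MeasurableSet {ω | dot p0 (vRstar ω) ≤ dot p0 (vT (πhat ω))}) :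
    ENNReal.ofReal (1 - δ) ≤ μ {ω | ∀ π : Fin S → Fin A, ∀ s, vR ω π s ≤ vT π s} ∧
    ENNReal.ofReal (1 - δ) ≤ μ {ω | dot p0 (vRstar ω) ≤ dot p0 (vT (πhat ω))} := by
  classical
  have hS' : (0:ℝ) < S := by exact_mod_cast hS
  have hA' : (0:ℝ) < A := by exact_mod_cast hA
  have hS1 : (1:ℝ) ≤ S := by exact_mod_cast hS
  have hA1 : (1:ℝ) ≤ A := by exact_mod_cast hA
  set ε : Fin S → Fin A → ℝ :=
    fun s a => Real.sqrt ((2 / (n s a : ℝ)) * Real.log ((S:ℝ) * A * 2 ^ S / δ)) with hεdef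
  have hnn : ∀ s a, 0 < n s a := fun s a => hn s a
  -- the Hoeffding ambiguity set is a subset of the simplex and nonempty
  have hsub : ∀ ω s a, AmbH ω s a ⊆ stdSimplex ℝ (Fin S) := by
    intro ω s a
    rw [hAmbH]
    exact fun p hp => hp.1
  have hne : ∀ ω s a, (AmbH ω s a).Nonempty := by
    intro ω s a
    refine ⟨empiricalDist (X s a) ω, ?_⟩
    rw [hAmbH]
    refine ⟨emp_mem_simplex (hnn s a) (X s a) ω, ?_⟩
    simp [Real.sqrt_nonneg]
  -- the good event
  set G : Set Ω := {ω | ∀ s a, Pstar s a ∈ AmbH ω s a} with hG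
  -- on the good event, safety holds for all policies
  have hG1 : G ⊆ {ω | ∀ π : Fin S → Fin A, ∀ s, vR ω π s ≤ vT π s} := by
    intro ω hω π s
    exact robust_fixed_le_true hS hγ0 hγ1 hPstar (hsub ω)
      (fun s' => hω s' (π s')) (hvR ω π) (hvT π) s
  -- event 1 is included in event 2
  have hE12 : {ω | ∀ π : Fin S → Fin A, ∀ s, vR ω π s ≤ vT π s} ⊆
      {ω | dot p0 (vRstar ω) ≤ dot p0 (vT (πhat ω))} := by
    intro ω hω
    have huniq : vRstar ω = vR ω (πhat ω) :=
      robust_fixed_unique hS hγ0 hγ1 (hsub ω) (hne ω) (hπhat ω) (hvR ω (πhat ω))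
    simp only [Set.mem_setOf_eq] at hω ⊢
    rw [huniq]
    unfold dot
    exact Finset.sum_le_sum fun j _ =>
      mul_le_mul_of_nonneg_left (hω (πhat ω) j) (hp0.1 j)
  -- the per-(s,a,B) bad events
  set Ev : (s : Fin S) → (a : Fin A) → Finset (Fin S) → Set Ω := fun s a B =>
    {ω | (n s a : ℝ) * (∑ j ∈ B, Pstar s a j) + (n s a) * (ε s a) / 2 ≤
      ∑ i, (if X s a i ω ∈ B then (1:ℝ) else 0)} with hEv
  -- the value of the exponential bound
  have hexp_eq : ∀ s a, Real.exp (-(((n s a):ℝ) * (ε s a) ^ 2 / 2)) =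
      δ / ((S:ℝ) * A * 2 ^ S) := by
    intro s a
    have hm1 : (1:ℝ) ≤ (n s a : ℝ) := by exact_mod_cast hn s a
    have hm0 : (0:ℝ) < n s a := by linarith
    have hbase : (0:ℝ) < (S:ℝ) * A * 2 ^ S / δ := by positivity
    have hP1 : (1:ℝ) ≤ 2 ^ S := one_le_pow₀ (by norm_num)
    have hSA : (1:ℝ) ≤ (S:ℝ) * A := by nlinarith
    have hSAP : (1:ℝ) ≤ (S:ℝ) * A * 2 ^ S := by nlinarith
    have h1le : (1:ℝ) ≤ (S:ℝ) * A * 2 ^ S / δ := by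
      rw [le_div_iff₀ hδ0]
      nlinarith
    have hL0 : 0 ≤ Real.log ((S:ℝ) * A * 2 ^ S / δ) := Real.log_nonneg h1le
    have hsq : (ε s a) ^ 2 = (2 / (n s a : ℝ)) * Real.log ((S:ℝ) * A * 2 ^ S / δ) := by
      rw [hεdef]
      exact Real.sq_sqrt (by positivity)
    rw [hsq]
    have harith : ((n s a):ℝ) * ((2 / (n s a : ℝ)) *
        Real.log ((S:ℝ) * A * 2 ^ S / δ)) / 2 = Real.log ((S:ℝ) * A * 2 ^ S / δ) := by
      field_simp
    rw [harith, Real.exp_neg, Real.exp_log hbase, inv_div]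
  -- concentration for each bad event
  have hconc : ∀ s a (B : Finset (Fin S)),
      μ (Ev s a B) ≤ ENNReal.ofReal (δ / ((S:ℝ) * A * 2 ^ S)) := by
    intro s a B
    have hinj : Function.Injective
        (fun i : Fin (n s a) => (⟨s, a, i⟩ : (s : Fin S) × (a : Fin A) × Fin (n s a))) := by
      intro i j h
      simpa using h
    have hind : ProbabilityTheory.iIndepFun (X s a) μ :=
      iIndepFun_precomp hXindep _ hinj
    have := indicator_sum_concentration μ (hnn s a) (X s a) (hXmeas s a) hind
      (Pstar s a) ((hPstar s a).1) (hXlaw s a) B (ε s a) (Real.sqrt_nonneg _)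
    rw [hexp_eq s a] at this
    exact this
  -- the complement of the good event is contained in the union of bad events
  have hcompl : Gᶜ ⊆ ⋃ s, ⋃ a, ⋃ B : Finset (Fin S), Ev s a B := by
    intro ω hω
    simp only [hG, Set.mem_compl_iff, Set.mem_setOf_eq, not_forall] at hω
    obtain ⟨s, a, hsa⟩ := hω
    rw [hAmbH] at hsa
    have hdist : ε s a < ∑ j, |Pstar s a j - empiricalDist (X s a) ω j| := by
      by_contra hle
      push_neg at hle
      exact hsa ⟨hPstar s a, hle⟩
    obtain ⟨B, hB⟩ := weissman_inclusion (hnn s a) (X s a) ω (Pstar s a)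
      (hPstar s a) (ε s a) hdist
    exact Set.mem_iUnion.2 ⟨s, Set.mem_iUnion.2 ⟨a, Set.mem_iUnion.2 ⟨B, hB⟩⟩⟩
  -- union bound
  have hP1 : (1:ℝ) ≤ 2 ^ S := one_le_pow₀ (by norm_num)
  have hkey2 : (2:ℝ) ^ S * (δ / ((S:ℝ) * A * 2 ^ S)) = δ / ((S:ℝ) * A) := by
    rw [eq_div_iff (by positivity)]
    field_simp
  have hkeyA : (A:ℝ) * (δ / ((S:ℝ) * A)) = δ / S := by
    rw [eq_div_iff (by positivity)]
    field_simp
  have hkeyS : (S:ℝ) * (δ / (S:ℝ)) = δ := by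
    field_simp
  have hGc : μ Gᶜ ≤ ENNReal.ofReal δ := by
    refine le_trans (measure_mono hcompl) ?_
    refine le_trans (measure_iUnion_fintype_le μ _) ?_
    have hstep1 : ∀ s : Fin S, μ (⋃ a, ⋃ B : Finset (Fin S), Ev s a B) ≤
        ENNReal.ofReal (δ / (S:ℝ)) := by
      intro s
      refine le_trans (measure_iUnion_fintype_le μ _) ?_
      have hstep2 : ∀ a : Fin A, μ (⋃ B : Finset (Fin S), Ev s a B) ≤
          ENNReal.ofReal (δ / ((S:ℝ) * A)) := by
        intro a
        refine le_trans (measure_iUnion_fintype_le μ _) ?_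
        refine le_trans (Finset.sum_le_sum fun B _ => hconc s a B) ?_
        rw [Finset.sum_const, Finset.card_univ, Fintype.card_finset, Fintype.card_fin,
          nsmul_eq_mul, ← ENNReal.ofReal_natCast, ← ENNReal.ofReal_mul (by positivity)]
        apply ENNReal.ofReal_le_ofReal
        push_cast
        rw [hkey2]
      refine le_trans (Finset.sum_le_sum fun a _ => hstep2 a) ?_
      rw [Finset.sum_const, Finset.card_univ, Fintype.card_fin, nsmul_eq_mul,
        ← ENNReal.ofReal_natCast, ← ENNReal.ofReal_mul (by positivity)]
      exact ENNReal.ofReal_le_ofReal (le_of_eq hkeyA)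
    refine le_trans (Finset.sum_le_sum fun s _ => hstep1 s) ?_
    rw [Finset.sum_const, Finset.card_univ, Fintype.card_fin, nsmul_eq_mul,
      ← ENNReal.ofReal_natCast, ← ENNReal.ofReal_mul (by positivity)]
    exact ENNReal.ofReal_le_ofReal (le_of_eq hkeyS)
  -- lower bound on the good event
  have hμG : ENNReal.ofReal (1 - δ) ≤ μ G := by
    have hunion : (1:ENNReal) ≤ μ G + μ Gᶜ := by
      have h := measure_union_le (μ := μ) G Gᶜ
      rw [Set.union_compl_self] at h
      simpa using h
    have e1 : ENNReal.ofReal (1 - δ) = 1 - ENNReal.ofReal δ := by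
      rw [ENNReal.ofReal_sub _ hδ0.le, ENNReal.ofReal_one]
    rw [e1]
    refine le_trans (tsub_le_tsub_left hGc 1) ?_
    exact tsub_le_iff_right.2 hunion
  have hμE1 : ENNReal.ofReal (1 - δ) ≤
      μ {ω | ∀ π : Fin S → Fin A, ∀ s, vR ω π s ≤ vT π s} :=
    le_trans hμG (measure_mono hG1)
  exact ⟨hμE1, le_trans hμE1 (measure_mono hE12)⟩
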